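/- Let Z₁, …, Z_k be i.i.d. Laplace random variables with scale b > 0 and let q₁, …, q_k ∈ [0,1]. Then for any α > 0: if α ≤ k·b, then Pr[Σᵢ qᵢZᵢ > α] ≤ exp(−α²/(6kb²)); and if α > k·b, then Pr[Σᵢ qᵢZᵢ > α] ≤ exp(−α/(6kb)). -/

import Mathlib

open MeasureTheory

/-- The Laplace distribution with scale `b`, given by density exp(−|x|/b)/(2b). -/
noncomputable def laplaceMeasure (b : ℝ) : Measure ℝ :=
  volume.withDensity fun x => ENNReal.ofReal (Real.exp (-|x| / b) / (2 * b))

open Real Set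
open scoped ENNReal


lemma lintegral_pi_fin_prod {n : ℕ} (μ : Measure ℝ) [SigmaFinite μ]
    (f : Fin n → ℝ → ℝ≥0∞) (hf : ∀ i, Measurable (f i)) :
    ∫⁻ x : Fin n → ℝ, ∏ i, f i (x i) ∂(Measure.pi fun _ => μ) = ∏ i, ∫⁻ x, f i x ∂μ := by
  induction n with
  | zero => simp [lintegral_const]
  | succ n ih =>
    have hmp := (measurePreserving_piFinSuccAbove (fun _ : Fin (n+1) => μ) 0).symm
    have hmeas : Measurable fun x : Fin (n+1) → ℝ => ∏ i, f i (x i) :=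
      Finset.measurable_prod _ fun i _ => (hf i).comp (measurable_pi_apply i)
    rw [← hmp.lintegral_comp hmeas]
    have : ∀ y : ℝ × (Fin n → ℝ),
        (∏ i, f i (((MeasurableEquiv.piFinSuccAbove (fun _ : Fin (n+1) => ℝ) 0).symm y) i))
        = f 0 y.1 * ∏ i : Fin n, f i.succ (y.2 i) := by
      intro y
      rw [Fin.prod_univ_succ]
      simp [MeasurableEquiv.piFinSuccAbove_symm_apply, Fin.insertNthEquiv, Fin.zero_succAbove]
    simp_rw [this]
    rw [lintegral_prod_mul (f := fun x => f 0 x) (g := fun x : Fin n → ℝ => ∏ i, f i.succ (x i))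
      (hf 0).aemeasurable
      (Finset.measurable_prod _ fun (i : Fin n) _ =>
        (hf i.succ).comp (measurable_pi_apply i)).aemeasurable,
      ih _ (fun i => hf i.succ), Fin.prod_univ_succ]


lemma exp_neg_integral_Ioi (c : ℝ) (hc : 0 < c) :
    ∫ x in Ioi (0:ℝ), exp (-(c * x)) = 1 / c := by
  have := integral_comp_mul_left_Ioi (fun x => exp (-x)) 0 hc
  simp only [mul_zero, integral_exp_neg_Ioi_zero, smul_eq_mul, mul_one,
    abs_of_pos (inv_pos.2 hc)] at this
  rw [this, one_div]

lemma exp_integral_Iic (c : ℝ) (hc : 0 < c) :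
    ∫ x in Iic (0:ℝ), exp (c * x) = 1 / c := by
  have := integral_comp_neg_Iic (0:ℝ) (fun x => exp (-(c * x)))
  simp only [mul_neg, neg_neg, neg_zero] at this
  rw [this, exp_neg_integral_Ioi c hc]

lemma exp_integrableOn_Iic (c : ℝ) (hc : 0 < c) :
    IntegrableOn (fun x => exp (c * x)) (Iic (0:ℝ)) := by
  have A : MeasurableEmbedding fun x : ℝ => -x :=
    (Homeomorph.neg ℝ).isClosedEmbedding.measurableEmbedding
  have h := A.integrableOn_map_iff (f := fun x => exp (c * x)) (μ := volume) (s := Iic (0:ℝ))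
  rw [Measure.map_neg_eq_self (volume : Measure ℝ)] at h
  rw [h]
  have : ((fun x : ℝ => -x) ⁻¹' Iic 0) = Ici 0 := by
    ext x; simp [neg_nonpos]
  rw [this]
  rw [integrableOn_Ici_iff_integrableOn_Ioi]
  have := exp_neg_integrableOn_Ioi 0 hc
  refine this.congr_fun (fun x _ => ?_) measurableSet_Ioi
  simp [Function.comp, mul_comm]

variable {b s : ℝ}

/-- density function -/
noncomputable def lapF (b s : ℝ) (x : ℝ) : ℝ := exp (s * x) * (exp (-|x| / b) / (2 * b))

lemma lapF_Ioi (hb : 0 < b) (x : ℝ) (hx : x ∈ Ioi (0:ℝ)) :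
    lapF b s x = exp (-((1/b - s) * x)) / (2 * b) := by
  rw [lapF, abs_of_pos hx]
  rw [div_eq_mul_inv (exp _), ← mul_assoc, ← exp_add]
  ring_nf

lemma lapF_Iic (hb : 0 < b) (x : ℝ) (hx : x ∈ Iic (0:ℝ)) :
    lapF b s x = exp ((1/b + s) * x) / (2 * b) := by
  rw [lapF, abs_of_nonpos hx]
  rw [div_eq_mul_inv (exp _), ← mul_assoc, ← exp_add]
  ring_nf

lemma lapF_integrableOn_Ioi (hb : 0 < b) (hs : |s| < 1/b) :
    IntegrableOn (lapF b s) (Ioi (0:ℝ)) := by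
  obtain ⟨hs1, hs2⟩ := abs_lt.mp hs
  have h1 : 0 < 1/b - s := by linarith
  have h : IntegrableOn (fun x => exp (-(1/b - s) * x) / (2*b)) (Ioi (0:ℝ)) :=
    (exp_neg_integrableOn_Ioi 0 h1).div_const (2*b)
  refine IntegrableOn.congr_fun h (fun x hx => ?_) measurableSet_Ioi
  rw [lapF_Ioi hb x hx, neg_mul]

lemma lapF_integrableOn_Iic (hb : 0 < b) (hs : |s| < 1/b) :
    IntegrableOn (lapF b s) (Iic (0:ℝ)) := by
  obtain ⟨hs1, hs2⟩ := abs_lt.mp hs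
  have h1 : 0 < 1/b + s := by linarith
  have h : IntegrableOn (fun x => exp ((1/b + s) * x) / (2*b)) (Iic (0:ℝ)) :=
    (exp_integrableOn_Iic _ h1).div_const (2*b)
  refine IntegrableOn.congr_fun h (fun x hx => ?_) measurableSet_Iic
  rw [lapF_Iic hb x hx]

lemma lapF_integrable (hb : 0 < b) (hs : |s| < 1/b) : Integrable (lapF b s) := by
  rw [← integrableOn_univ, ← Iic_union_Ioi (a := (0:ℝ))]
  exact (lapF_integrableOn_Iic hb hs).union (lapF_integrableOn_Ioi hb hs)

lemma lapF_integral (hb : 0 < b) (hs : |s| < 1/b) :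
    ∫ x, lapF b s x = 1 / (1 - s^2 * b^2) := by
  obtain ⟨hs1, hs2⟩ := abs_lt.mp hs
  have h1 : 0 < 1/b - s := by linarith
  have h2 : 0 < 1/b + s := by linarith
  rw [← intervalIntegral.integral_Iic_add_Ioi (lapF_integrableOn_Iic hb hs) (lapF_integrableOn_Ioi hb hs)]
  rw [setIntegral_congr_fun measurableSet_Iic (lapF_Iic hb),
    setIntegral_congr_fun measurableSet_Ioi (lapF_Ioi hb)]
  simp_rw [div_eq_mul_inv _ (2*b)]
  rw [integral_mul_const, integral_mul_const, exp_integral_Iic _ h2, exp_neg_integral_Ioi _ h1]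
  have hb' : b ≠ 0 := hb.ne'
  have h3 : (1/b - s) * (1/b + s) ≠ 0 := by positivity
  have h4 : 1 - s^2*b^2 ≠ 0 := by
    have hbb : (1/b - s) * (1/b + s) * b^2 = 1 - s^2*b^2 := by
      field_simp; ring
    rw [← hbb]; positivity
  rw [eq_div_iff h4]
  have hb1 : (1/b)*b = 1 := by field_simp
  have k1 : (0:ℝ) < 1 + s*b := by nlinarith
  have k2 : (0:ℝ) < 1 - s*b := by nlinarith
  have r1 : 1/(1/b+s) = b/(1+s*b) := by
    rw [div_eq_div_iff h2.ne' k1.ne']; field_simp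
  have r2 : 1/(1/b-s) = b/(1-s*b) := by
    rw [div_eq_div_iff h1.ne' k2.ne']; field_simp
  rw [r1, r2]
  field_simp [show 1 + b*s ≠ 0 by nlinarith, show 1 - b*s ≠ 0 by nlinarith]
  ring

lemma lapF_nonneg (hb : 0 < b) (x : ℝ) : 0 ≤ lapF b s x := by
  rw [lapF]; positivity

lemma lap_mgf (hb : 0 < b) (hs : |s| < 1/b) :
    ∫⁻ x, ENNReal.ofReal (exp (s * x)) ∂(laplaceMeasure b)
      = ENNReal.ofReal (1 / (1 - s^2 * b^2)) := by
  have hd : Measurable fun x : ℝ => ENNReal.ofReal (exp (-|x| / b) / (2 * b)) := by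
    measurability
  rw [laplaceMeasure, lintegral_withDensity_eq_lintegral_mul _ hd (show Measurable fun x : ℝ => ENNReal.ofReal (exp (s * x)) by fun_prop)]
  have h : ∀ x : ℝ,
      ENNReal.ofReal (exp (-|x| / b) / (2 * b)) * ENNReal.ofReal (exp (s * x))
        = ENNReal.ofReal (lapF b s x) := by
    intro x
    rw [← ENNReal.ofReal_mul (by positivity), lapF]
    congr 1; ring
  simp only [Pi.mul_apply]
  simp_rw [h]
  rw [← ofReal_integral_eq_lintegral_ofReal (lapF_integrable hb hs)
    (Filter.Eventually.of_forall (lapF_nonneg hb)), lapF_integral hb hs]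

lemma laplace_isFiniteMeasure (hb : 0 < b) : IsFiniteMeasure (laplaceMeasure b) := by
  have h0 : |(0:ℝ)| < 1/b := by simp; positivity
  have hi := lapF_integrable hb h0
  have h2 : Integrable (fun x : ℝ => exp (-|x| / b) / (2 * b)) := by
    refine hi.congr (Filter.Eventually.of_forall fun x => ?_)
    simp [lapF]
  exact isFiniteMeasure_withDensity_ofReal h2.hasFiniteIntegral

lemma chernoff {Ω : Type*} [MeasurableSpace Ω] {μ : Measure Ω} {S : Ω → ℝ}
    (hS : Measurable S) (t α : ℝ) (ht : 0 < t) :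
    μ {ω | α < S ω} ≤ ENNReal.ofReal (exp (-(t * α))) *
      ∫⁻ ω, ENNReal.ofReal (exp (t * S ω)) ∂μ := by
  have hset : MeasurableSet {ω | α < S ω} := measurableSet_lt measurable_const hS
  have h1 : ENNReal.ofReal (exp (t * α)) * μ {ω | α < S ω}
      ≤ ∫⁻ ω, ENNReal.ofReal (exp (t * S ω)) ∂μ := by
    calc ENNReal.ofReal (exp (t * α)) * μ {ω | α < S ω}
        = ∫⁻ _ω in {ω | α < S ω}, ENNReal.ofReal (exp (t * α)) ∂μ := by
          rw [setLIntegral_const]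
      _ ≤ ∫⁻ ω in {ω | α < S ω}, ENNReal.ofReal (exp (t * S ω)) ∂μ := by
          refine setLIntegral_mono (by measurability) fun ω hω => ?_
          exact ENNReal.ofReal_le_ofReal (exp_le_exp.2
            (mul_le_mul_of_nonneg_left (le_of_lt hω) ht.le))
      _ ≤ ∫⁻ ω, ENNReal.ofReal (exp (t * S ω)) ∂μ := setLIntegral_le_lintegral _ _
  have h2 : ENNReal.ofReal (exp (-(t * α))) * ENNReal.ofReal (exp (t * α)) = 1 := by
    rw [← ENNReal.ofReal_mul (exp_pos _).le, ← exp_add]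
    simp
  calc μ {ω | α < S ω} = ENNReal.ofReal (exp (-(t * α))) * (ENNReal.ofReal (exp (t * α)) *
        μ {ω | α < S ω}) := by rw [← mul_assoc, h2, one_mul]
    _ ≤ _ := mul_le_mul_right h1 _

lemma one_div_one_sub_le {x : ℝ} (h0 : 0 ≤ x) (h1 : x ≤ 1/3) :
    1 / (1 - x) ≤ exp (3 * x / 2) := by
  have hx : (0:ℝ) < 1 - x := by linarith
  have h2 : 1 / (1 - x) = x / (1 - x) + 1 := by field_simp; ring
  have h3 : x / (1 - x) ≤ 3 * x / 2 := by
    rw [div_le_iff₀ hx]; nlinarith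
  calc 1 / (1 - x) = x / (1 - x) + 1 := h2
    _ ≤ exp (x / (1 - x)) := add_one_le_exp _
    _ ≤ exp (3 * x / 2) := exp_le_exp.2 h3

lemma mgf_prod_bound (k : ℕ) (hb : 0 < b) (q : Fin k → ℝ)
    (hq : ∀ i, q i ∈ Set.Icc (0:ℝ) 1) (t : ℝ) (ht : 0 < t) (htb : t * b ≤ 1/3) :
    ∫⁻ ω : Fin k → ℝ, ENNReal.ofReal (exp (t * ∑ i, q i * ω i))
        ∂(Measure.pi fun _ => laplaceMeasure b)
      ≤ ENNReal.ofReal (exp (3/2 * k * (t^2 * b^2))) := by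
  haveI : IsFiniteMeasure (laplaceMeasure b) := laplace_isFiniteMeasure hb
  have hq0 : ∀ i, 0 ≤ q i := fun i => (hq i).1
  have hq1 : ∀ i, q i ≤ 1 := fun i => (hq i).2
  have hexp : ∀ ω : Fin k → ℝ,
      exp (t * ∑ i, q i * ω i) = ∏ i, exp ((t * q i) * ω i) := by
    intro ω
    rw [← exp_sum, Finset.mul_sum]
    congr 1
    exact Finset.sum_congr rfl fun i _ => by ring
  simp_rw [hexp, ENNReal.ofReal_prod_of_nonneg (fun i _ => (exp_pos _).le)]
  rw [lintegral_pi_fin_prod _ _ (fun i => show Measurable fun x : ℝ => ENNReal.ofReal (exp ((t * q i) * x)) by fun_prop)]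
  have habs : ∀ i, |t * q i| < 1/b := by
    intro i
    rw [abs_of_nonneg (mul_nonneg ht.le (hq0 i)), lt_div_iff₀ hb]
    nlinarith [hq1 i, hq0 i]
  have heach : ∀ i ∈ Finset.univ, (∫⁻ x, ENNReal.ofReal (exp ((t * q i) * x))
      ∂(laplaceMeasure b)) = ENNReal.ofReal (1 / (1 - (t * q i)^2 * b^2)) :=
    fun i _ => lap_mgf hb (habs i)
  rw [Finset.prod_congr rfl heach]
  have hx0 : ∀ i, (0:ℝ) ≤ (t * q i)^2 * b^2 := fun i => by positivity
  have hx1 : ∀ i, (t * q i)^2 * b^2 ≤ 1/3 := by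
    intro i
    have e : (t * q i)^2 * b^2 = (t * q i * b)^2 := by ring
    have h2 : t * q i * b ≤ t * b := by nlinarith [mul_nonneg (mul_nonneg ht.le hb.le) (sub_nonneg.2 (hq1 i))]
    have h3 : 0 ≤ t * q i * b := mul_nonneg (mul_nonneg ht.le (hq0 i)) hb.le
    rw [e]; nlinarith
  calc ∏ i, ENNReal.ofReal (1 / (1 - (t * q i)^2 * b^2))
      ≤ ∏ i, ENNReal.ofReal (exp (3 * ((t * q i)^2 * b^2) / 2)) :=
        Finset.prod_le_prod' fun i _ =>
          ENNReal.ofReal_le_ofReal (one_div_one_sub_le (hx0 i) (hx1 i))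
    _ = ENNReal.ofReal (∏ i, exp (3 * ((t * q i)^2 * b^2) / 2)) :=
        (ENNReal.ofReal_prod_of_nonneg fun i _ => (exp_pos _).le).symm
    _ = ENNReal.ofReal (exp (∑ i, 3 * ((t * q i)^2 * b^2) / 2)) := by rw [exp_sum]
    _ ≤ ENNReal.ofReal (exp (3/2 * k * (t^2 * b^2))) := by
        refine ENNReal.ofReal_le_ofReal (exp_le_exp.2 ?_)
        calc ∑ i : Fin k, 3 * ((t * q i)^2 * b^2) / 2
            ≤ ∑ _i : Fin k, 3 * (t^2 * b^2) / 2 := by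
              refine Finset.sum_le_sum fun i _ => ?_
              have hq2 : (q i)^2 ≤ 1 := by nlinarith [hq1 i, hq0 i]
              nlinarith [hq2, sq_nonneg (t * b)]
          _ = 3/2 * k * (t^2 * b^2) := by
              rw [Finset.sum_const, Finset.card_univ, Fintype.card_fin]
              ring

lemma main_bound (k : ℕ) (hb : 0 < b) (q : Fin k → ℝ)
    (hq : ∀ i, q i ∈ Set.Icc (0:ℝ) 1) (α t : ℝ) (ht : 0 < t) (htb : t * b ≤ 1/3) :
    (Measure.pi fun _ : Fin k => laplaceMeasure b) {ω | α < ∑ i, q i * ω i}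
      ≤ ENNReal.ofReal (exp (-(t * α) + 3/2 * k * (t^2 * b^2))) := by
  have hS : Measurable fun ω : Fin k → ℝ => ∑ i, q i * ω i :=
    Finset.measurable_sum _ fun i _ => by fun_prop
  calc (Measure.pi fun _ : Fin k => laplaceMeasure b) {ω | α < ∑ i, q i * ω i}
      ≤ ENNReal.ofReal (exp (-(t * α))) *
          ∫⁻ ω, ENNReal.ofReal (exp (t * ∑ i, q i * ω i))
            ∂(Measure.pi fun _ : Fin k => laplaceMeasure b) := chernoff hS t α ht
    _ ≤ ENNReal.ofReal (exp (-(t * α))) * ENNReal.ofReal (exp (3/2 * k * (t^2 * b^2))) :=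
        mul_le_mul_right (mgf_prod_bound k hb q hq t ht htb) _
    _ = ENNReal.ofReal (exp (-(t * α) + 3/2 * k * (t^2 * b^2))) := by
        rw [← ENNReal.ofReal_mul (exp_pos _).le, ← exp_add]

/-- tail bound for [0,1]-weighted sums of i.i.d. Laplace(b) variables. -/
theorem stmt6 (k : ℕ) (hk : 1 ≤ k) (b : ℝ) (hb : 0 < b) (q : Fin k → ℝ)
    (hq : ∀ i, q i ∈ Set.Icc (0:ℝ) 1) (α : ℝ) (hα : 0 < α) :
    (α ≤ k * b →
      (Measure.pi fun _ : Fin k => laplaceMeasure b) {ω | α < ∑ i, q i * ω i}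
        ≤ ENNReal.ofReal (Real.exp (-(α ^ 2) / (6 * k * b ^ 2)))) ∧
    (k * b < α →
      (Measure.pi fun _ : Fin k => laplaceMeasure b) {ω | α < ∑ i, q i * ω i}
        ≤ ENNReal.ofReal (Real.exp (-α / (6 * k * b)))) := by
  have hk0 : (0:ℝ) < k := by exact_mod_cast hk
  have hk1 : (1:ℝ) ≤ k := by exact_mod_cast hk
  constructor
  · intro h
    have ht : 0 < α / (3 * k * b^2) := by positivity
    have htb : α / (3 * k * b^2) * b ≤ 1/3 := by
      have e : α / (3 * k * b^2) * b = α / (3 * k * b) := by field_simp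
      rw [e, div_le_iff₀ (by positivity)]
      linarith
    refine (main_bound k hb q hq α _ ht htb).trans (le_of_eq ?_)
    congr 1
    congr 1
    field_simp
    ring
  · intro h
    have ht : 0 < 1 / (3 * b) := by positivity
    have htb : 1 / (3 * b) * b ≤ 1/3 := by
      rw [div_mul_eq_mul_div, div_le_div_iff₀ (by positivity) (by norm_num)]
      linarith
    refine (main_bound k hb q hq α _ ht htb).trans ?_
    refine ENNReal.ofReal_le_ofReal (exp_le_exp.2 ?_)
    have e1 : -(1 / (3 * b) * α) + 3/2 * k * ((1 / (3 * b))^2 * b^2)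
        = (-2 * α + k * b) / (6 * b) := by field_simp; ring
    rw [e1, div_le_div_iff₀ (by positivity) (by positivity)]
    nlinarith [mul_lt_mul_of_pos_left h hk0, mul_nonneg (sub_nonneg.2 hk1) hα.le]
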